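/- Let D > 0, L > 0 and M^F ∈ (0,1), and set M^L = 1 − M^F. Let ρ̂ : ℝ → ℝ be 2π-periodic, strictly positive and twice continuously differentiable with ∫_{−π}^{π} ρ̂(x) dx = 1, and set ρ̄^F = M^F·ρ̂. Define g₁(x) = (ρ̂'(x)/ρ̂(x))', g₂(x) = log ρ̂(x), C = ∫_{−π}^{π} log ρ̂(x) dx, and h(x) = −π·D·g₁(x) + (π·D/L²)·g₂(x) − D·C/(2·L²). Then there exists a 2π-periodic continuous function ρ̄^L : ℝ → ℝ with ρ̄^L(x) ≥ 0 for all x and ∫_{−π}^{π} ρ̄^L(x) dx = M^L such that (ρ̄^F·(f*ρ̄^L))'(x) = D·ρ̄^F''(x) for all x, if and only if M^L ≥ max_{x ∈ [−π,π]} h(x). -/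

import Mathlib

/-- The repulsive interaction kernel on `[-π, π]` with characteristic length `L`:
`f(x) = sgn(x)/(e^{2π/L} - 1) · [e^{(2π-|x|)/L} - e^{|x|/L}]`. -/
noncomputable def repKernel (L x : ℝ) : ℝ :=
  Real.sign x / (Real.exp (2 * Real.pi / L) - 1) *
    (Real.exp ((2 * Real.pi - |x|) / L) - Real.exp (|x| / L))

/-- Wrap a real number to the fundamental domain `[-π, π)`. -/
noncomputable def wrap (x : ℝ) : ℝ :=
  2 * Real.pi * Int.fract ((x + Real.pi) / (2 * Real.pi)) - Real.pi

/-- The 2π-periodic extension of the repulsive kernel. -/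
noncomputable def perKernel (L x : ℝ) : ℝ := repKernel L (wrap x)

open MeasureTheory intervalIntegral Set

lemma wrap_mem_Ico (x : ℝ) : wrap x ∈ Set.Ico (-Real.pi) Real.pi := by
  unfold wrap
  have h0 := Int.fract_nonneg ((x + Real.pi) / (2 * Real.pi))
  have h1 := Int.fract_lt_one ((x + Real.pi) / (2 * Real.pi))
  have hπ := Real.pi_pos
  constructor <;> nlinarith

lemma wrap_eq_self {x : ℝ} (hx : x ∈ Set.Ico (-Real.pi) Real.pi) : wrap x = x := by
  unfold wrap
  have hπ := Real.pi_pos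
  have h : Int.fract ((x + Real.pi) / (2 * Real.pi)) = (x + Real.pi) / (2 * Real.pi) := by
    rw [Int.fract_eq_self]
    constructor
    · apply div_nonneg
      · linarith [hx.1]
      · linarith
    · rw [div_lt_one (by linarith)]
      linarith [hx.2]
  rw [h]
  field_simp
  ring

lemma wrap_periodic : Function.Periodic wrap (2 * Real.pi) := by
  intro x
  unfold wrap
  have hπ : (2 : ℝ) * Real.pi ≠ 0 := by positivity
  have h : (x + 2 * Real.pi + Real.pi) / (2 * Real.pi)
      = (x + Real.pi) / (2 * Real.pi) + (1 : ℤ) := by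
    push_cast
    field_simp
    ring
  rw [h, Int.fract_add_intCast]

lemma perKernel_periodic (L : ℝ) : Function.Periodic (perKernel L) (2 * Real.pi) := by
  intro x
  unfold perKernel
  rw [wrap_periodic x]

lemma repKernel_neg (L x : ℝ) : repKernel L (-x) = -repKernel L x := by
  unfold repKernel
  rw [Real.sign_neg, abs_neg]
  ring

noncomputable def Bk (L s : ℝ) : ℝ :=
  (Real.exp ((2 * Real.pi - s) / L) - Real.exp (s / L)) / (Real.exp (2 * Real.pi / L) - 1)

lemma repKernel_of_pos {L x : ℝ} (hx : 0 < x) : repKernel L x = Bk L x := by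
  unfold repKernel Bk
  rw [Real.sign_of_pos hx, abs_of_pos hx]
  ring

lemma wrap_pi : wrap Real.pi = -Real.pi := by
  unfold wrap
  have hπ : (2 : ℝ) * Real.pi ≠ 0 := by positivity
  have h : (Real.pi + Real.pi) / (2 * Real.pi) = ((1 : ℤ) : ℝ) := by
    push_cast
    field_simp
    ring
  rw [h, Int.fract_intCast]
  ring

lemma perKernel_eq_pos {L s : ℝ} (hs : s ∈ Set.Ioc 0 Real.pi) : perKernel L s = Bk L s := by
  rcases eq_or_lt_of_le hs.2 with h | h
  · subst h
    unfold perKernel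
    rw [wrap_pi]
    unfold repKernel Bk
    have : (2 * Real.pi - Real.pi) = Real.pi := by ring
    rw [abs_neg, abs_of_pos Real.pi_pos, this, sub_self, mul_zero]
    simp
  · unfold perKernel
    rw [wrap_eq_self ⟨by linarith [hs.1, Real.pi_pos], h⟩]
    exact repKernel_of_pos hs.1

lemma perKernel_eq_neg {L s : ℝ} (hs : s ∈ Set.Ico (-Real.pi) 0) :
    perKernel L s = -Bk L (-s) := by
  unfold perKernel
  rw [wrap_eq_self ⟨hs.1, lt_trans hs.2 Real.pi_pos⟩]
  have h := repKernel_neg L (-s)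
  rw [neg_neg] at h
  rw [h, repKernel_of_pos (by linarith [hs.2])]

lemma measurable_repKernel (L : ℝ) : Measurable (repKernel L) := by
  unfold repKernel
  have hsgn : Measurable Real.sign := by
    unfold Real.sign
    exact Measurable.ite (measurableSet_lt measurable_id measurable_const)
      measurable_const <| Measurable.ite
        (measurableSet_lt measurable_const measurable_id) measurable_const measurable_const
  fun_prop (disch := exact hsgn)

lemma measurable_perKernel (L : ℝ) : Measurable (perKernel L) := by
  unfold perKernel wrap
  apply (measurable_repKernel L).comp
  exact ((measurable_const.mul (measurable_fract.comp
    ((measurable_id.add_const _).div_const _))).sub measurable_const)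

lemma exp_two_pi_gt {L : ℝ} (hL : 0 < L) : 1 < Real.exp (2 * Real.pi / L) := by
  rw [show (1:ℝ) = Real.exp 0 by simp]
  apply Real.exp_lt_exp.2
  positivity

lemma abs_perKernel_le {L : ℝ} (hL : 0 < L) (x : ℝ) :
    |perKernel L x| ≤ 2 * Real.exp (2 * Real.pi / L) / (Real.exp (2 * Real.pi / L) - 1) := by
  have hE := exp_two_pi_gt hL
  have hw := wrap_mem_Ico x
  have hπ := Real.pi_pos
  set t := wrap x with ht
  have habs : |t| ≤ 2 * Real.pi := by
    rw [abs_le]; constructor <;> [linarith [hw.1]; linarith [hw.2.le]]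
  have h1 : Real.exp ((2 * Real.pi - |t|) / L) ≤ Real.exp (2 * Real.pi / L) := by
    apply Real.exp_le_exp.2
    apply (div_le_div_iff_of_pos_right hL).2
    linarith [abs_nonneg t]
  have h2 : Real.exp (|t| / L) ≤ Real.exp (2 * Real.pi / L) := by
    apply Real.exp_le_exp.2
    exact (div_le_div_iff_of_pos_right hL).2 habs
  have hsgn : |Real.sign t| ≤ 1 := by
    unfold Real.sign
    split_ifs <;> simp
  unfold perKernel repKernel
  rw [← ht, abs_mul, abs_div]
  rw [abs_of_pos (by linarith : (0:ℝ) < Real.exp (2*Real.pi/L) - 1)]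
  have hb : |Real.exp ((2 * Real.pi - |t|) / L) - Real.exp (|t| / L)|
      ≤ 2 * Real.exp (2 * Real.pi / L) := by
    rw [abs_sub_le_iff]
    constructor <;> nlinarith [Real.exp_pos ((2 * Real.pi - |t|) / L), Real.exp_pos (|t| / L)]
  calc |Real.sign t| / (Real.exp (2 * Real.pi / L) - 1)
        * |Real.exp ((2 * Real.pi - |t|) / L) - Real.exp (|t| / L)|
      ≤ 1 / (Real.exp (2 * Real.pi / L) - 1) * (2 * Real.exp (2 * Real.pi / L)) := by
        apply mul_le_mul
        · exact (div_le_div_iff_of_pos_right (by linarith)).2 hsgn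
        · exact hb
        · positivity
        · exact div_nonneg zero_le_one (by linarith)
    _ = 2 * Real.exp (2 * Real.pi / L) / (Real.exp (2 * Real.pi / L) - 1) := by ring

lemma intervalIntegrable_of_bounded {g : ℝ → ℝ} {C a b : ℝ} (hg : Measurable g)
    (hb : ∀ y, |g y| ≤ C) : IntervalIntegrable g MeasureTheory.volume a b := by
  rw [intervalIntegrable_iff]
  apply MeasureTheory.Measure.integrableOn_of_bounded
  · exact (measure_Ioc_lt_top).ne
  · exact hg.aestronglyMeasurable
  · exact Filter.Eventually.of_forall fun y => by simpa using hb y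

lemma integral_perKernel_zero (L : ℝ) :
    (∫ s in (-Real.pi)..Real.pi, perKernel L s) = 0 := by
  have hane : ∀ᵐ s : ℝ, s ≠ Real.pi := by
    simp [MeasureTheory.ae_iff, show {a : ℝ | ¬ a ≠ Real.pi} = {Real.pi} by ext a; simp]
  have hcong : (∫ s in (-Real.pi)..Real.pi, perKernel L s)
      = ∫ s in (-Real.pi)..Real.pi, repKernel L s := by
    apply intervalIntegral.integral_congr_ae
    filter_upwards [hane] with s hs hmem
    have hπ := Real.pi_pos
    rw [Set.uIoc_of_le (by linarith)] at hmem
    unfold perKernel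
    rw [wrap_eq_self ⟨hmem.1.le, lt_of_le_of_ne hmem.2 hs⟩]
  rw [hcong]
  have h := intervalIntegral.integral_comp_neg (a := -Real.pi) (b := Real.pi) (f := repKernel L)
  rw [neg_neg] at h
  have h2 : (∫ x in (-Real.pi)..Real.pi, repKernel L (-x))
      = -∫ x in (-Real.pi)..Real.pi, repKernel L x := by
    rw [← intervalIntegral.integral_neg]
    congr 1
    ext x
    exact repKernel_neg L x
  rw [h2] at h
  linarith

noncomputable def Fa (L : ℝ) (g : ℝ → ℝ) (x : ℝ) : ℝ := ∫ y in (0:ℝ)..x, Real.exp (y / L) * g y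

noncomputable def Fb (L : ℝ) (g : ℝ → ℝ) (x : ℝ) : ℝ := ∫ y in (0:ℝ)..x, Real.exp (-y / L) * g y

noncomputable def Vc (L : ℝ) (g : ℝ → ℝ) (x : ℝ) : ℝ :=
  (Real.exp (2*Real.pi/L) * Real.exp (-x/L) * (Fa L g x - Fa L g (x - Real.pi))
   + Real.exp (-x/L) * (Fa L g (x + Real.pi) - Fa L g x)
   - Real.exp (x/L) * (Fb L g x - Fb L g (x - Real.pi))
   - Real.exp (2*Real.pi/L) * Real.exp (x/L) * (Fb L g (x + Real.pi) - Fb L g x))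
  / (Real.exp (2*Real.pi/L) - 1)

noncomputable def Wc (L : ℝ) (g : ℝ → ℝ) (x : ℝ) : ℝ :=
  -(Real.exp (2*Real.pi/L) * Real.exp (-x/L) * (Fa L g x - Fa L g (x - Real.pi))
   + Real.exp (-x/L) * (Fa L g (x + Real.pi) - Fa L g x)
   + Real.exp (x/L) * (Fb L g x - Fb L g (x - Real.pi))
   + Real.exp (2*Real.pi/L) * Real.exp (x/L) * (Fb L g (x + Real.pi) - Fb L g x))
  / (L * (Real.exp (2*Real.pi/L) - 1))

lemma periodic_bound {g : ℝ → ℝ} (hc : Continuous g)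
    (hp : Function.Periodic g (2 * Real.pi)) : ∃ M : ℝ, ∀ y, |g y| ≤ M := by
  obtain ⟨M, hM0⟩ := (isCompact_Icc (a := (0:ℝ)) (b := 2*Real.pi)).exists_bound_of_continuousOn
    hc.continuousOn
  refine ⟨M, fun y => ?_⟩
  obtain ⟨z, hz, hzy⟩ := hp.exists_mem_Ico₀ (by positivity) y
  rw [hzy]
  simpa using hM0 z ⟨hz.1, hz.2.le⟩

lemma conv_eq_Vc {L : ℝ} (hL : 0 < L) {g : ℝ → ℝ} (hc : Continuous g)
    (hp : Function.Periodic g (2 * Real.pi)) (x : ℝ) :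
    (∫ y in (-Real.pi)..Real.pi, perKernel L (x - y) * g y) = Vc L g x := by
  have hπ := Real.pi_pos
  have hE := exp_two_pi_gt hL
  have hEne : Real.exp (2*Real.pi/L) - 1 ≠ 0 := by linarith
  obtain ⟨M, hM⟩ := periodic_bound hc hp
  have hM0 : (0:ℝ) ≤ M := le_trans (abs_nonneg _) (hM 0)
  -- periodicity of the integrand
  have hker : ∀ t, perKernel L (t - 2*Real.pi) = perKernel L t :=
    fun t => (perKernel_periodic L).sub_eq t
  have hgp : Function.Periodic (fun y => perKernel L (x - y) * g y) (2 * Real.pi) := by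
    intro y
    have h : x - (y + 2*Real.pi) = (x - y) - 2*Real.pi := by ring
    simp only [h, hker, hp y]
  -- shift the interval of integration
  have hshift := hgp.intervalIntegral_add_eq (-Real.pi) (x - Real.pi)
  rw [show -Real.pi + 2*Real.pi = Real.pi by ring,
      show x - Real.pi + 2*Real.pi = x + Real.pi by ring] at hshift
  -- integrability
  have hCb : (0:ℝ) ≤ 2 * Real.exp (2*Real.pi/L) / (Real.exp (2*Real.pi/L) - 1) :=
    div_nonneg (by positivity) (by linarith)
  have hbnd : ∀ y, |perKernel L (x - y) * g y|
      ≤ 2 * Real.exp (2*Real.pi/L) / (Real.exp (2*Real.pi/L) - 1) * M := fun y => by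
    rw [abs_mul]
    exact mul_le_mul (abs_perKernel_le hL _) (hM y) (abs_nonneg _) hCb
  have hmeas : Measurable fun y => perKernel L (x - y) * g y :=
    ((measurable_perKernel L).comp (measurable_const.sub measurable_id)).mul hc.measurable
  have hint : ∀ a b : ℝ, IntervalIntegrable (fun y => perKernel L (x-y)*g y)
      MeasureTheory.volume a b := fun a b => intervalIntegrable_of_bounded hmeas hbnd
  have hsplit := intervalIntegral.integral_add_adjacent_intervals
    (hint (x-Real.pi) x) (hint x (x+Real.pi))
  -- a.e. identification with the explicit kernel on each half period
  have hane : ∀ᵐ y : ℝ, y ≠ x := by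
    simp [MeasureTheory.ae_iff, show {a : ℝ | ¬ a ≠ x} = {x} by ext a; simp]
  have hp1 : (∫ y in (x-Real.pi)..x, perKernel L (x - y) * g y)
      = ∫ y in (x-Real.pi)..x, Bk L (x - y) * g y := by
    apply intervalIntegral.integral_congr_ae
    filter_upwards [hane] with y hy hmem
    rw [Set.uIoc_of_le (by linarith)] at hmem
    congr 1
    apply perKernel_eq_pos
    exact ⟨by have := lt_of_le_of_ne hmem.2 hy; linarith, by linarith [hmem.1]⟩
  have hp2 : (∫ y in x..(x+Real.pi), perKernel L (x - y) * g y)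
      = ∫ y in x..(x+Real.pi), -Bk L (y - x) * g y := by
    apply intervalIntegral.integral_congr_ae
    filter_upwards [hane] with y hy hmem
    rw [Set.uIoc_of_le (by linarith)] at hmem
    congr 1
    have h := perKernel_eq_neg (L := L) (s := x - y)
      ⟨by linarith [hmem.2], by linarith [hmem.1]⟩
    rw [show -(x - y) = y - x by ring] at h
    exact h
  -- expand the kernel into separated exponentials
  have e1 : ∀ y : ℝ, Bk L (x - y) * g y
      = (Real.exp (2*Real.pi/L) * Real.exp (-x/L)/(Real.exp (2*Real.pi/L)-1))
          * (Real.exp (y/L) * g y)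
        + (-(Real.exp (x/L))/(Real.exp (2*Real.pi/L)-1)) * (Real.exp (-y/L) * g y) := by
    intro y
    unfold Bk
    rw [show (2*Real.pi - (x - y))/L = 2*Real.pi/L + (-x/L + y/L) by ring,
        show (x - y)/L = x/L + -y/L by ring,
        Real.exp_add, Real.exp_add, Real.exp_add]
    field_simp
    ring
  have e2 : ∀ y : ℝ, -Bk L (y - x) * g y
      = (Real.exp (-x/L)/(Real.exp (2*Real.pi/L)-1)) * (Real.exp (y/L) * g y)
        + (-(Real.exp (2*Real.pi/L) * Real.exp (x/L))/(Real.exp (2*Real.pi/L)-1))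
          * (Real.exp (-y/L) * g y) := by
    intro y
    unfold Bk
    rw [show (2*Real.pi - (y - x))/L = 2*Real.pi/L + (x/L + -y/L) by ring,
        show (y - x)/L = -x/L + y/L by ring,
        Real.exp_add, Real.exp_add, Real.exp_add]
    field_simp
    ring
  -- continuity and integrability of the separated pieces
  have hu : Continuous fun y : ℝ => Real.exp (y/L) * g y :=
    ((Real.continuous_exp.comp (continuous_id.div_const L)).mul hc)
  have hw : Continuous fun y : ℝ => Real.exp (-y/L) * g y :=
    ((Real.continuous_exp.comp (continuous_id.neg.div_const L)).mul hc)
  have hiu : ∀ a b : ℝ, IntervalIntegrable (fun y => Real.exp (y/L)*g y)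
      MeasureTheory.volume a b := fun a b => hu.intervalIntegrable a b
  have hiw : ∀ a b : ℝ, IntervalIntegrable (fun y => Real.exp (-y/L)*g y)
      MeasureTheory.volume a b := fun a b => hw.intervalIntegrable a b
  have hlin : ∀ (a b c1 c2 : ℝ),
      (∫ y in a..b, (c1 * (Real.exp (y/L) * g y) + c2 * (Real.exp (-y/L) * g y)))
      = c1 * (∫ y in a..b, Real.exp (y/L)*g y) + c2 * (∫ y in a..b, Real.exp (-y/L)*g y) := by
    intro a b c1 c2
    rw [intervalIntegral.integral_add ((hiu a b).const_mul c1) ((hiw a b).const_mul c2),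
        intervalIntegral.integral_const_mul, intervalIntegral.integral_const_mul]
  have hFa : ∀ a b : ℝ, (∫ y in a..b, Real.exp (y/L)*g y) = Fa L g b - Fa L g a := by
    intro a b
    unfold Fa
    rw [← intervalIntegral.integral_interval_sub_left (hiu 0 b) (hiu 0 a)]
  have hFb : ∀ a b : ℝ, (∫ y in a..b, Real.exp (-y/L)*g y) = Fb L g b - Fb L g a := by
    intro a b
    unfold Fb
    rw [← intervalIntegral.integral_interval_sub_left (hiw 0 b) (hiw 0 a)]
  calc (∫ y in (-Real.pi)..Real.pi, perKernel L (x - y) * g y)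
      = ∫ y in (x-Real.pi)..(x+Real.pi), perKernel L (x - y) * g y := hshift
    _ = (∫ y in (x-Real.pi)..x, perKernel L (x - y) * g y)
        + ∫ y in x..(x+Real.pi), perKernel L (x - y) * g y := hsplit.symm
    _ = (∫ y in (x-Real.pi)..x, Bk L (x-y) * g y)
        + ∫ y in x..(x+Real.pi), -Bk L (y-x) * g y := by rw [hp1, hp2]
    _ = Vc L g x := by
        rw [show (fun y => Bk L (x-y) * g y) = fun y =>
              (Real.exp (2*Real.pi/L) * Real.exp (-x/L)/(Real.exp (2*Real.pi/L)-1))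
                * (Real.exp (y/L) * g y)
              + (-(Real.exp (x/L))/(Real.exp (2*Real.pi/L)-1)) * (Real.exp (-y/L) * g y)
            from funext e1,
          show (fun y => -Bk L (y-x) * g y) = fun y =>
              (Real.exp (-x/L)/(Real.exp (2*Real.pi/L)-1)) * (Real.exp (y/L) * g y)
              + (-(Real.exp (2*Real.pi/L) * Real.exp (x/L))/(Real.exp (2*Real.pi/L)-1))
                * (Real.exp (-y/L) * g y)
            from funext e2,
          hlin, hlin, hFa, hFb, hFa, hFb]
        unfold Vc
        field_simp
        ring

lemma hasDerivAt_Fa {L : ℝ} {g : ℝ → ℝ} (hc : Continuous g) (x : ℝ) :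
    HasDerivAt (Fa L g) (Real.exp (x/L) * g x) x := by
  have hcont : Continuous fun y : ℝ => Real.exp (y/L) * g y :=
    (Real.continuous_exp.comp (continuous_id.div_const L)).mul hc
  unfold Fa
  exact intervalIntegral.integral_hasDerivAt_right (hcont.intervalIntegrable 0 x)
    hcont.aestronglyMeasurable.stronglyMeasurableAtFilter hcont.continuousAt

lemma hasDerivAt_Fb {L : ℝ} {g : ℝ → ℝ} (hc : Continuous g) (x : ℝ) :
    HasDerivAt (Fb L g) (Real.exp (-x/L) * g x) x := by
  have hcont : Continuous fun y : ℝ => Real.exp (-y/L) * g y :=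
    (Real.continuous_exp.comp (continuous_id.neg.div_const L)).mul hc
  unfold Fb
  exact intervalIntegral.integral_hasDerivAt_right (hcont.intervalIntegrable 0 x)
    hcont.aestronglyMeasurable.stronglyMeasurableAtFilter hcont.continuousAt

lemma hasDerivAt_Vc {L : ℝ} (hL : 0 < L) {g : ℝ → ℝ} (hc : Continuous g)
    (hp : Function.Periodic g (2 * Real.pi)) (x : ℝ) :
    HasDerivAt (Vc L g) (2 * g x + Wc L g x) x := by
  have hπ := Real.pi_pos
  have hE := exp_two_pi_gt hL
  have hEne : Real.exp (2*Real.pi/L) - 1 ≠ 0 := by linarith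
  have hgg : g (x + Real.pi) = g (x - Real.pi) := by
    have h := hp (x - Real.pi)
    rw [show x - Real.pi + 2*Real.pi = x + Real.pi by ring] at h
    exact h
  -- derivatives of the building blocks
  have hFxm : HasDerivAt (fun x => Fa L g (x - Real.pi))
      (Real.exp ((x - Real.pi)/L) * g (x - Real.pi)) x := by
    simpa [Function.comp_def] using (hasDerivAt_Fa (L := L) hc (x - Real.pi)).comp x
      ((hasDerivAt_id x).sub_const Real.pi)
  have hFxp : HasDerivAt (fun x => Fa L g (x + Real.pi))
      (Real.exp ((x + Real.pi)/L) * g (x + Real.pi)) x := by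
    simpa [Function.comp_def] using (hasDerivAt_Fa (L := L) hc (x + Real.pi)).comp x
      ((hasDerivAt_id x).add_const Real.pi)
  have hGxm : HasDerivAt (fun x => Fb L g (x - Real.pi))
      (Real.exp (-(x - Real.pi)/L) * g (x - Real.pi)) x := by
    simpa [Function.comp_def] using (hasDerivAt_Fb (L := L) hc (x - Real.pi)).comp x
      ((hasDerivAt_id x).sub_const Real.pi)
  have hGxp : HasDerivAt (fun x => Fb L g (x + Real.pi))
      (Real.exp (-(x + Real.pi)/L) * g (x + Real.pi)) x := by
    simpa [Function.comp_def] using (hasDerivAt_Fb (L := L) hc (x + Real.pi)).comp x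
      ((hasDerivAt_id x).add_const Real.pi)
  have hA : HasDerivAt (fun x => Fa L g x - Fa L g (x - Real.pi))
      (Real.exp (x/L) * g x - Real.exp ((x - Real.pi)/L) * g (x - Real.pi)) x :=
    (hasDerivAt_Fa hc x).sub hFxm
  have hB : HasDerivAt (fun x => Fa L g (x + Real.pi) - Fa L g x)
      (Real.exp ((x + Real.pi)/L) * g (x + Real.pi) - Real.exp (x/L) * g x) x :=
    hFxp.sub (hasDerivAt_Fa hc x)
  have hCd : HasDerivAt (fun x => Fb L g x - Fb L g (x - Real.pi))
      (Real.exp (-x/L) * g x - Real.exp (-(x - Real.pi)/L) * g (x - Real.pi)) x :=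
    (hasDerivAt_Fb hc x).sub hGxm
  have hDd : HasDerivAt (fun x => Fb L g (x + Real.pi) - Fb L g x)
      (Real.exp (-(x + Real.pi)/L) * g (x + Real.pi) - Real.exp (-x/L) * g x) x :=
    hGxp.sub (hasDerivAt_Fb hc x)
  have hem : HasDerivAt (fun x : ℝ => Real.exp (-x/L)) (-Real.exp (-x/L)/L) x := by
    have h := (Real.hasDerivAt_exp (-x/L)).comp x (((hasDerivAt_id x).neg).div_const L)
    simpa [mul_comm, mul_div_assoc, Function.comp_def] using h.congr_deriv (by ring)
  have hep : HasDerivAt (fun x : ℝ => Real.exp (x/L)) (Real.exp (x/L)/L) x := by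
    have h := (Real.hasDerivAt_exp (x/L)).comp x ((hasDerivAt_id x).div_const L)
    simpa [mul_comm, mul_div_assoc, Function.comp_def] using h.congr_deriv (by ring)
  have hT1 := ((hem.const_mul (Real.exp (2*Real.pi/L))).mul hA)
  have hT2 := (hem.mul hB)
  have hT3 := (hep.mul hCd)
  have hT4 := ((hep.const_mul (Real.exp (2*Real.pi/L))).mul hDd)
  have H := (((hT1.add hT2).sub hT3).sub hT4).div_const (Real.exp (2*Real.pi/L) - 1)
  have hVc : Vc L g = fun x =>
      (Real.exp (2*Real.pi/L) * Real.exp (-x/L) * (Fa L g x - Fa L g (x - Real.pi))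
       + Real.exp (-x/L) * (Fa L g (x + Real.pi) - Fa L g x)
       - Real.exp (x/L) * (Fb L g x - Fb L g (x - Real.pi))
       - Real.exp (2*Real.pi/L) * Real.exp (x/L) * (Fb L g (x + Real.pi) - Fb L g x))
      / (Real.exp (2*Real.pi/L) - 1) := rfl
  rw [hVc]
  refine H.congr_deriv ?_
  unfold Wc
  rw [show Real.exp ((x - Real.pi)/L) = Real.exp (x/L) / Real.exp (Real.pi/L) by
        rw [show (x - Real.pi)/L = x/L - Real.pi/L by ring, Real.exp_sub],
      show Real.exp (-(x - Real.pi)/L) = Real.exp (Real.pi/L) / Real.exp (x/L) by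
        rw [show -(x - Real.pi)/L = Real.pi/L - x/L by ring, Real.exp_sub],
      show Real.exp ((x + Real.pi)/L) = Real.exp (x/L) * Real.exp (Real.pi/L) by
        rw [show (x + Real.pi)/L = x/L + Real.pi/L by ring, Real.exp_add],
      show Real.exp (-(x + Real.pi)/L) = (Real.exp (x/L) * Real.exp (Real.pi/L))⁻¹ by
        rw [show -(x + Real.pi)/L = -(x/L + Real.pi/L) by ring, Real.exp_neg,
            Real.exp_add],
      show Real.exp (-x/L) = (Real.exp (x/L))⁻¹ by
        rw [show -x/L = -(x/L) by ring, Real.exp_neg],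
      show Real.exp (2*Real.pi/L) = Real.exp (Real.pi/L) * Real.exp (Real.pi/L) by
        rw [show 2*Real.pi/L = Real.pi/L + Real.pi/L by ring, Real.exp_add],
      hgg]
  have hq := Real.exp_pos (Real.pi/L)
  have ha := Real.exp_pos (x/L)
  have hq2 : Real.exp (Real.pi/L) * Real.exp (Real.pi/L) - 1 ≠ 0 := by
    rw [show Real.exp (2*Real.pi/L) = Real.exp (Real.pi/L) * Real.exp (Real.pi/L) by
        rw [show 2*Real.pi/L = Real.pi/L + Real.pi/L by ring, Real.exp_add]] at hEne
    exact hEne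
  have hq3 : Real.exp (Real.pi/L) ^ 2 - 1 ≠ 0 := by rw [sq]; exact hq2
  field_simp
  ring

lemma hasDerivAt_Wc {L : ℝ} (hL : 0 < L) {g : ℝ → ℝ} (hc : Continuous g)
    (hp : Function.Periodic g (2 * Real.pi)) (x : ℝ) :
    HasDerivAt (Wc L g) (Vc L g x / L^2) x := by
  have hπ := Real.pi_pos
  have hE := exp_two_pi_gt hL
  have hEne : Real.exp (2*Real.pi/L) - 1 ≠ 0 := by linarith
  have hgg : g (x + Real.pi) = g (x - Real.pi) := by
    have h := hp (x - Real.pi)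
    rw [show x - Real.pi + 2*Real.pi = x + Real.pi by ring] at h
    exact h
  -- derivatives of the building blocks
  have hFxm : HasDerivAt (fun x => Fa L g (x - Real.pi))
      (Real.exp ((x - Real.pi)/L) * g (x - Real.pi)) x := by
    simpa [Function.comp_def] using (hasDerivAt_Fa (L := L) hc (x - Real.pi)).comp x
      ((hasDerivAt_id x).sub_const Real.pi)
  have hFxp : HasDerivAt (fun x => Fa L g (x + Real.pi))
      (Real.exp ((x + Real.pi)/L) * g (x + Real.pi)) x := by
    simpa [Function.comp_def] using (hasDerivAt_Fa (L := L) hc (x + Real.pi)).comp x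
      ((hasDerivAt_id x).add_const Real.pi)
  have hGxm : HasDerivAt (fun x => Fb L g (x - Real.pi))
      (Real.exp (-(x - Real.pi)/L) * g (x - Real.pi)) x := by
    simpa [Function.comp_def] using (hasDerivAt_Fb (L := L) hc (x - Real.pi)).comp x
      ((hasDerivAt_id x).sub_const Real.pi)
  have hGxp : HasDerivAt (fun x => Fb L g (x + Real.pi))
      (Real.exp (-(x + Real.pi)/L) * g (x + Real.pi)) x := by
    simpa [Function.comp_def] using (hasDerivAt_Fb (L := L) hc (x + Real.pi)).comp x
      ((hasDerivAt_id x).add_const Real.pi)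
  have hA : HasDerivAt (fun x => Fa L g x - Fa L g (x - Real.pi))
      (Real.exp (x/L) * g x - Real.exp ((x - Real.pi)/L) * g (x - Real.pi)) x :=
    (hasDerivAt_Fa hc x).sub hFxm
  have hB : HasDerivAt (fun x => Fa L g (x + Real.pi) - Fa L g x)
      (Real.exp ((x + Real.pi)/L) * g (x + Real.pi) - Real.exp (x/L) * g x) x :=
    hFxp.sub (hasDerivAt_Fa hc x)
  have hCd : HasDerivAt (fun x => Fb L g x - Fb L g (x - Real.pi))
      (Real.exp (-x/L) * g x - Real.exp (-(x - Real.pi)/L) * g (x - Real.pi)) x :=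
    (hasDerivAt_Fb hc x).sub hGxm
  have hDd : HasDerivAt (fun x => Fb L g (x + Real.pi) - Fb L g x)
      (Real.exp (-(x + Real.pi)/L) * g (x + Real.pi) - Real.exp (-x/L) * g x) x :=
    hGxp.sub (hasDerivAt_Fb hc x)
  have hem : HasDerivAt (fun x : ℝ => Real.exp (-x/L)) (-Real.exp (-x/L)/L) x := by
    have h := (Real.hasDerivAt_exp (-x/L)).comp x (((hasDerivAt_id x).neg).div_const L)
    simpa [mul_comm, mul_div_assoc, Function.comp_def] using h.congr_deriv (by ring)
  have hep : HasDerivAt (fun x : ℝ => Real.exp (x/L)) (Real.exp (x/L)/L) x := by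
    have h := (Real.hasDerivAt_exp (x/L)).comp x ((hasDerivAt_id x).div_const L)
    simpa [mul_comm, mul_div_assoc, Function.comp_def] using h.congr_deriv (by ring)
  have hT1 := ((hem.const_mul (Real.exp (2*Real.pi/L))).mul hA)
  have hT2 := (hem.mul hB)
  have hT3 := (hep.mul hCd)
  have hT4 := ((hep.const_mul (Real.exp (2*Real.pi/L))).mul hDd)
  have H := ((((hT1.add hT2).add hT3).add hT4).neg).div_const (L * (Real.exp (2*Real.pi/L) - 1))
  have hWc : Wc L g = fun x =>
      -(Real.exp (2*Real.pi/L) * Real.exp (-x/L) * (Fa L g x - Fa L g (x - Real.pi))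
       + Real.exp (-x/L) * (Fa L g (x + Real.pi) - Fa L g x)
       + Real.exp (x/L) * (Fb L g x - Fb L g (x - Real.pi))
       + Real.exp (2*Real.pi/L) * Real.exp (x/L) * (Fb L g (x + Real.pi) - Fb L g x))
      / (L * (Real.exp (2*Real.pi/L) - 1)) := rfl
  rw [hWc]
  refine H.congr_deriv ?_
  unfold Vc
  rw [show Real.exp ((x - Real.pi)/L) = Real.exp (x/L) / Real.exp (Real.pi/L) by
        rw [show (x - Real.pi)/L = x/L - Real.pi/L by ring, Real.exp_sub],
      show Real.exp (-(x - Real.pi)/L) = Real.exp (Real.pi/L) / Real.exp (x/L) by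
        rw [show -(x - Real.pi)/L = Real.pi/L - x/L by ring, Real.exp_sub],
      show Real.exp ((x + Real.pi)/L) = Real.exp (x/L) * Real.exp (Real.pi/L) by
        rw [show (x + Real.pi)/L = x/L + Real.pi/L by ring, Real.exp_add],
      show Real.exp (-(x + Real.pi)/L) = (Real.exp (x/L) * Real.exp (Real.pi/L))⁻¹ by
        rw [show -(x + Real.pi)/L = -(x/L + Real.pi/L) by ring, Real.exp_neg,
            Real.exp_add],
      show Real.exp (-x/L) = (Real.exp (x/L))⁻¹ by
        rw [show -x/L = -(x/L) by ring, Real.exp_neg],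
      show Real.exp (2*Real.pi/L) = Real.exp (Real.pi/L) * Real.exp (Real.pi/L) by
        rw [show 2*Real.pi/L = Real.pi/L + Real.pi/L by ring, Real.exp_add],
      hgg]
  have hq := Real.exp_pos (Real.pi/L)
  have ha := Real.exp_pos (x/L)
  have hq2 : Real.exp (Real.pi/L) * Real.exp (Real.pi/L) - 1 ≠ 0 := by
    rw [show Real.exp (2*Real.pi/L) = Real.exp (Real.pi/L) * Real.exp (Real.pi/L) by
        rw [show 2*Real.pi/L = Real.pi/L + Real.pi/L by ring, Real.exp_add]] at hEne
    exact hEne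
  field_simp
  ring

lemma Vc_periodic {L : ℝ} (hL : 0 < L) {g : ℝ → ℝ} (hc : Continuous g)
    (hp : Function.Periodic g (2 * Real.pi)) :
    Function.Periodic (Vc L g) (2 * Real.pi) := by
  intro x
  rw [← conv_eq_Vc hL hc hp x, ← conv_eq_Vc hL hc hp (x + 2*Real.pi)]
  apply intervalIntegral.integral_congr
  intro y _
  simp only
  rw [show x + 2*Real.pi - y = (x - y) + 2*Real.pi by ring, perKernel_periodic L (x - y)]

lemma ode_vanish {L : ℝ} (hL : 0 < L) {u z : ℝ → ℝ}
    (hu : ∀ x, HasDerivAt u (z x) x) (hz : ∀ x, HasDerivAt z (u x / L^2) x)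
    (huper : Function.Periodic u (2*Real.pi)) : ∀ x, u x = 0 := by
  have hπ := Real.pi_pos
  have hzper : Function.Periodic z (2*Real.pi) := by
    intro x
    have h := (hu (x + 2*Real.pi)).comp x ((hasDerivAt_id x).add_const (2*Real.pi))
    rw [show (u ∘ fun x : ℝ => id x + 2*Real.pi) = u from funext fun y => huper y] at h
    simpa using h.unique (hu x)
  have hem : ∀ x : ℝ, HasDerivAt (fun x : ℝ => Real.exp (-x/L)) (-Real.exp (-x/L)/L) x := by
    intro x
    have h := (Real.hasDerivAt_exp (-x/L)).comp x (((hasDerivAt_id x).neg).div_const L)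
    simpa [mul_comm, mul_div_assoc, Function.comp_def] using h.congr_deriv (by ring)
  have hep : ∀ x : ℝ, HasDerivAt (fun x : ℝ => Real.exp (x/L)) (Real.exp (x/L)/L) x := by
    intro x
    have h := (Real.hasDerivAt_exp (x/L)).comp x ((hasDerivAt_id x).div_const L)
    simpa [mul_comm, mul_div_assoc, Function.comp_def] using h.congr_deriv (by ring)
  have hqd : ∀ x, HasDerivAt (fun x => Real.exp (-x/L) * (z x + u x / L)) 0 x := by
    intro x
    have hiz : HasDerivAt (fun x => z x + u x / L) (u x / L^2 + z x / L) x :=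
      (hz x).add ((hu x).div_const L)
    have h := (hem x).mul hiz
    refine h.congr_deriv ?_
    field_simp
    ring
  have hqc : ∀ x y : ℝ, Real.exp (-x/L) * (z x + u x / L)
      = Real.exp (-y/L) * (z y + u y / L) :=
    fun x y => is_const_of_deriv_eq_zero
      (fun t => (hqd t).differentiableAt) (fun t => (hqd t).deriv) x y
  have hz0 : z (2*Real.pi) = z 0 := by simpa using hzper 0
  have hu0 : u (2*Real.pi) = u 0 := by simpa using huper 0
  have hexplt : Real.exp (-(2*Real.pi)/L) < 1 := by
    apply Real.exp_lt_one_iff.2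
    have : (0:ℝ) < 2*Real.pi/L := by positivity
    have heq : -(2*Real.pi)/L = -(2*Real.pi/L) := by ring
    rw [heq]
    linarith
  have hs : z 0 + u 0 / L = 0 := by
    have h := hqc (2*Real.pi) 0
    rw [hz0, hu0] at h
    rw [show -(0:ℝ)/L = 0 by ring, Real.exp_zero, one_mul] at h
    have h2 : (z 0 + u 0/L) * (Real.exp (-(2*Real.pi)/L) - 1) = 0 := by
      have : -(2*Real.pi)/L = -(2*Real.pi)/L := rfl
      linear_combination h
    rcases mul_eq_zero.mp h2 with h3 | h3
    · exact h3
    · exact absurd h3 (by nlinarith)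
  have hzu : ∀ x, z x + u x / L = 0 := by
    intro x
    have h := hqc x 0
    rw [show -(0:ℝ)/L = 0 by ring, Real.exp_zero, one_mul, hs, mul_eq_zero] at h
    rcases h with h | h
    · exact absurd h (Real.exp_ne_zero _)
    · exact h
  have hrd : ∀ x, HasDerivAt (fun x => Real.exp (x/L) * u x) 0 x := by
    intro x
    have h := (hep x).mul (hu x)
    have hval : Real.exp (x/L)/L * u x + Real.exp (x/L) * z x = 0 := by
      have := hzu x
      have hLne : L ≠ 0 := ne_of_gt hL
      field_simp at this ⊢
      linear_combination (Real.exp (x/L)) * this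
    rw [hval] at h
    exact h
  have hrc : ∀ x y : ℝ, Real.exp (x/L) * u x = Real.exp (y/L) * u y :=
    fun x y => is_const_of_deriv_eq_zero
      (fun t => (hrd t).differentiableAt) (fun t => (hrd t).deriv) x y
  have hu00 : u 0 = 0 := by
    have h := hrc (2*Real.pi) 0
    rw [hu0, show (0:ℝ)/L = 0 by ring, Real.exp_zero, one_mul] at h
    have h2 : u 0 * (Real.exp (2*Real.pi/L) - 1) = 0 := by linear_combination h
    rcases mul_eq_zero.mp h2 with h3 | h3
    · exact h3
    · have := exp_two_pi_gt hL
      nlinarith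
  intro x
  have h := hrc x 0
  rw [hu00, mul_zero, mul_eq_zero] at h
  rcases h with h | h
  · exact absurd h (Real.exp_ne_zero _)
  · exact h

lemma integral_conv_zero {L : ℝ} (hL : 0 < L) {g : ℝ → ℝ} (hc : Continuous g)
    (hp : Function.Periodic g (2 * Real.pi)) :
    (∫ x in (-Real.pi)..Real.pi, (∫ y in (-Real.pi)..Real.pi, perKernel L (x - y) * g y)) = 0 := by
  have hπ := Real.pi_pos
  have hE := exp_two_pi_gt hL
  obtain ⟨M, hM⟩ := periodic_bound hc hp
  have hM0 : (0:ℝ) ≤ M := le_trans (abs_nonneg _) (hM 0)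
  set Cb := 2 * Real.exp (2*Real.pi/L) / (Real.exp (2*Real.pi/L) - 1) with hCbdef
  have hCb : (0:ℝ) ≤ Cb := div_nonneg (by positivity) (by linarith)
  set μ := MeasureTheory.volume.restrict (Set.Ioc (-Real.pi) Real.pi) with hμ
  haveI : MeasureTheory.IsFiniteMeasure μ := by
    constructor
    rw [hμ, MeasureTheory.Measure.restrict_apply_univ]
    exact measure_Ioc_lt_top
  -- convert to set integrals
  have hle : -Real.pi ≤ Real.pi := by linarith
  have hout : (∫ x in (-Real.pi)..Real.pi,
        (∫ y in (-Real.pi)..Real.pi, perKernel L (x - y) * g y))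
      = ∫ x, (∫ y, perKernel L (x - y) * g y ∂μ) ∂μ := by
    rw [intervalIntegral.integral_of_le hle]
    congr 1
    funext x
    rw [intervalIntegral.integral_of_le hle]
  rw [hout]
  have hmeas : Measurable (Function.uncurry fun x y => perKernel L (x - y) * g y) :=
    ((measurable_perKernel L).comp (measurable_fst.sub measurable_snd)).mul
      (hc.measurable.comp measurable_snd)
  have hintg : MeasureTheory.Integrable
      (Function.uncurry fun x y => perKernel L (x - y) * g y) (μ.prod μ) := by
    apply (MeasureTheory.integrable_const (Cb * M)).mono' hmeas.aestronglyMeasurable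
    apply Filter.Eventually.of_forall
    rintro ⟨x, y⟩
    simp only [Function.uncurry]
    rw [Real.norm_eq_abs, abs_mul]
    exact mul_le_mul (abs_perKernel_le hL _) (hM y) (abs_nonneg _) hCb
  rw [MeasureTheory.integral_integral_swap hintg]
  have hinner : ∀ y : ℝ, (∫ x, perKernel L (x - y) * g y ∂μ) = 0 := by
    intro y
    have h1 : (∫ x, perKernel L (x - y) ∂μ) * g y = ∫ x, perKernel L (x - y) * g y ∂μ :=
      (MeasureTheory.integral_mul_const (g y) _).symm
    rw [← h1]
    have h2 : (∫ x, perKernel L (x - y) ∂μ)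
        = ∫ x in (-Real.pi)..Real.pi, perKernel L (x - y) := by
      rw [intervalIntegral.integral_of_le hle, hμ]
    have h3 : (∫ x in (-Real.pi)..Real.pi, perKernel L (x - y))
        = ∫ x in (-Real.pi - y)..(Real.pi - y), perKernel L x :=
      intervalIntegral.integral_comp_sub_right _ y
    have h4 := (perKernel_periodic L).intervalIntegral_add_eq (-Real.pi - y) (-Real.pi)
    rw [show -Real.pi - y + 2*Real.pi = Real.pi - y by ring,
        show -Real.pi + 2*Real.pi = Real.pi by ring] at h4
    rw [h2, h3, h4, integral_perKernel_zero L, zero_mul]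
  calc (∫ y, (∫ x, perKernel L (x - y) * g y ∂μ) ∂μ) = ∫ y, (0:ℝ) ∂μ := by
        congr 1
        funext y
        exact hinner y
    _ = 0 := by simp

lemma periodic_deriv {f : ℝ → ℝ} (hf : Differentiable ℝ f) {T : ℝ}
    (hp : Function.Periodic f T) : Function.Periodic (deriv f) T := by
  intro x
  have h := ((hf (x + T)).hasDerivAt.comp x ((hasDerivAt_id x).add_const T))
  rw [show (f ∘ fun x : ℝ => id x + T) = f from funext fun y => hp y] at h
  simpa using h.unique (hf x).hasDerivAt


/-- Theorem 1 of the paper (feasibility): given a normalized desired followers'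
density `ρ̂`, there exists a nonnegative, 2π-periodic leaders' density of mass
`M^L = 1 - M^F` making `ρ̄^F = M^F ρ̂` a steady state of the followers'
convection–diffusion equation if and only if `M^L ≥ max_{x∈[-π,π]} h(x)`. -/
theorem feasibility_iff_mass_bound
    (D L MF : ℝ) (hD : 0 < D) (hL : 0 < L) (hMF : MF ∈ Set.Ioo (0 : ℝ) 1)
    (ρhat : ℝ → ℝ)
    (hper : Function.Periodic ρhat (2 * Real.pi))
    (hpos : ∀ x, 0 < ρhat x)
    (hreg : ContDiff ℝ 2 ρhat)
    (hnorm : (∫ x in (-Real.pi)..Real.pi, ρhat x) = 1) :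
    (∃ ρL : ℝ → ℝ, Continuous ρL ∧ Function.Periodic ρL (2 * Real.pi) ∧
        (∀ x, 0 ≤ ρL x) ∧
        (∫ x in (-Real.pi)..Real.pi, ρL x) = 1 - MF ∧
        (∀ x, deriv
            (fun z => (MF * ρhat z) *
              ∫ y in (-Real.pi)..Real.pi, perKernel L (z - y) * ρL y) x
          = D * deriv (deriv (fun z => MF * ρhat z)) x))
    ↔ sSup ((fun x =>
          -Real.pi * D * deriv (fun z => deriv ρhat z / ρhat z) x
            + (Real.pi * D / L ^ 2) * Real.log (ρhat x)
            - D * (∫ y in (-Real.pi)..Real.pi, Real.log (ρhat y)) / (2 * L ^ 2)) ''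
          Set.Icc (-Real.pi) Real.pi) ≤ 1 - MF := by
  have hπ := Real.pi_pos
  have hE := exp_two_pi_gt hL
  have hLne : L ≠ 0 := ne_of_gt hL
  have hL2 : (L:ℝ)^2 ≠ 0 := pow_ne_zero 2 hLne
  have hMF0 := hMF.1
  have hρne : ∀ x, ρhat x ≠ 0 := fun x => (hpos x).ne'
  -- regularity facts
  have hd1 : Differentiable ℝ ρhat := hreg.differentiable two_ne_zero
  have hreg' : ContDiff ℝ (1 + 1 : ℕ) ρhat := by exact_mod_cast hreg
  have hC1d : ContDiff ℝ 1 (deriv ρhat) := by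
    have := (contDiff_succ_iff_deriv (n := 1)).mp (by exact_mod_cast hreg')
    exact this.2.2
  have hd2 : Differentiable ℝ (deriv ρhat) := hC1d.differentiable one_ne_zero
  have hcontd : Continuous (deriv ρhat) := hd2.continuous
  -- the logarithmic derivative  Q = ρ'/ρ
  have hQdiff : Differentiable ℝ (fun z => deriv ρhat z / ρhat z) :=
    hd2.div hd1 hρne
  have hQcont : Continuous (fun z : ℝ => deriv ρhat z / ρhat z) :=
    hcontd.div hd1.continuous hρne
  have hQC1 : ContDiff ℝ 1 (fun z => deriv ρhat z / ρhat z) :=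
    hC1d.div (hreg.of_le one_le_two) hρne
  have hQdc : Continuous (deriv (fun z => deriv ρhat z / ρhat z)) :=
    hQC1.continuous_deriv le_rfl
  have hdper : Function.Periodic (deriv ρhat) (2 * Real.pi) := periodic_deriv hd1 hper
  have hQper : Function.Periodic (fun z => deriv ρhat z / ρhat z) (2 * Real.pi) := by
    intro x
    simp only
    rw [hdper x, hper x]
  have hdQper : Function.Periodic (deriv (fun z => deriv ρhat z / ρhat z)) (2 * Real.pi) :=
    periodic_deriv hQdiff hQper
  have hlogc : Continuous (fun x => Real.log (ρhat x)) :=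
    continuous_iff_continuousAt.2 fun x =>
      (Real.continuousAt_log (hρne x)).comp hreg.continuous.continuousAt
  have hlogper : Function.Periodic (fun x => Real.log (ρhat x)) (2 * Real.pi) := by
    intro x
    simp only
    rw [hper x]
  -- log ρhat has derivative Q
  have hlogd : ∀ x, HasDerivAt (fun x => Real.log (ρhat x))
      (deriv ρhat x / ρhat x) x := by
    intro x
    have h := (Real.hasDerivAt_log (hρne x)).comp x (hd1 x).hasDerivAt
    simpa [div_eq_inv_mul, Function.comp_def] using h
  -- basic integrals
  have hiQd : IntervalIntegrable (deriv (fun z => deriv ρhat z / ρhat z))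
      MeasureTheory.volume (-Real.pi) Real.pi := hQdc.intervalIntegrable _ _
  have hIQd : (∫ x in (-Real.pi)..Real.pi, deriv (fun z => deriv ρhat z / ρhat z) x) = 0 := by
    rw [intervalIntegral.integral_deriv_eq_sub (fun x _ => hQdiff x) hiQd]
    have h := hQper (-Real.pi)
    rw [show -Real.pi + 2*Real.pi = Real.pi by ring] at h
    have h2 : deriv ρhat Real.pi / ρhat Real.pi
        = deriv ρhat (-Real.pi) / ρhat (-Real.pi) := h
    show deriv ρhat Real.pi / ρhat Real.pi
        - deriv ρhat (-Real.pi) / ρhat (-Real.pi) = 0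
    rw [h2]
    ring
  have hQ0 : (∫ x in (-Real.pi)..Real.pi, deriv ρhat x / ρhat x) = 0 := by
    rw [intervalIntegral.integral_eq_sub_of_hasDerivAt (f := fun x => Real.log (ρhat x))
      (fun x _ => hlogd x) (hQcont.intervalIntegrable _ _)]
    have h := hper (-Real.pi)
    rw [show -Real.pi + 2*Real.pi = Real.pi by ring] at h
    rw [h]
    ring
  constructor
  · -- necessity
    rintro ⟨ρL, hcρ, hpρ, hnn, hmass, hpde⟩
    -- the velocity field V = f * ρL
    have hconv : ∀ z, (∫ y in (-Real.pi)..Real.pi, perKernel L (z - y) * ρL y)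
        = Vc L ρL z := conv_eq_Vc hL hcρ hpρ
    have hfeq : (fun z => (MF * ρhat z) *
          ∫ y in (-Real.pi)..Real.pi, perKernel L (z - y) * ρL y)
        = fun z => (MF * ρhat z) * Vc L ρL z := funext fun z => by rw [hconv z]
    have hconst1 : deriv (fun z => MF * ρhat z) = fun z => MF * deriv ρhat z :=
      funext fun z => deriv_const_mul MF (hd1 z)
    -- product rule and the steady state equation
    have hprod : ∀ x, HasDerivAt (fun z => (MF * ρhat z) * Vc L ρL z)
        ((MF * deriv ρhat x) * Vc L ρL x
          + (MF * ρhat x) * (2 * ρL x + Wc L ρL x)) x := fun x =>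
      (((hd1 x).hasDerivAt.const_mul MF).mul (hasDerivAt_Vc hL hcρ hpρ x))
    have hsteady : ∀ x, (MF * deriv ρhat x) * Vc L ρL x
        + (MF * ρhat x) * (2 * ρL x + Wc L ρL x)
        = D * (MF * deriv (deriv ρhat) x) := by
      intro x
      have h1 := hpde x
      rw [hfeq] at h1
      rw [(hprod x).deriv] at h1
      rw [hconst1, deriv_const_mul MF (hd2 x)] at h1
      exact h1
    -- Φ = ρ̄F V - D ρ̄F' is constant
    have hΦd : ∀ x, HasDerivAt
        (fun x => (MF * ρhat x) * Vc L ρL x - D * MF * deriv ρhat x) 0 x := by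
      intro x
      have h := (hprod x).sub (((hd2 x).hasDerivAt.const_mul MF).const_mul D)
      have h2 : (MF * deriv ρhat x) * Vc L ρL x
          + (MF * ρhat x) * (2 * ρL x + Wc L ρL x)
          - D * (MF * deriv (deriv ρhat) x) = 0 := by
        rw [hsteady x]; ring
      rw [h2] at h
      exact h.congr_of_eventuallyEq (Filter.Eventually.of_forall fun y => by simp only [Pi.sub_apply]; ring)
    have hΦc : ∀ x y : ℝ, (MF * ρhat x) * Vc L ρL x - D * MF * deriv ρhat x
        = (MF * ρhat y) * Vc L ρL y - D * MF * deriv ρhat y :=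
      fun x y => is_const_of_deriv_eq_zero
        (fun t => (hΦd t).differentiableAt) (fun t => (hΦd t).deriv) x y
    -- the constant is zero, by integrating V over one period
    have hVform : ∀ x, Vc L ρL x
        = (((MF * ρhat 0) * Vc L ρL 0 - D * MF * deriv ρhat 0) / MF) * (ρhat x)⁻¹
          + D * (deriv ρhat x / ρhat x) := by
      intro x
      have h := hΦc x 0
      have hMFne : MF ≠ 0 := ne_of_gt hMF0
      have hne := hρne x
      field_simp
      apply mul_left_cancel₀ hMFne
      linear_combination h
    have hVint : (∫ x in (-Real.pi)..Real.pi, Vc L ρL x) = 0 := by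
      have h := integral_conv_zero hL hcρ hpρ
      have h2 : (fun x => ∫ y in (-Real.pi)..Real.pi, perKernel L (x - y) * ρL y)
          = fun x => Vc L ρL x := funext fun x => hconv x
      rw [h2] at h
      exact h
    have hinvc : Continuous (fun x => (ρhat x)⁻¹) := hreg.continuous.inv₀ hρne
    have hinvpos : (0:ℝ) < ∫ x in (-Real.pi)..Real.pi, (ρhat x)⁻¹ :=
      intervalIntegral.intervalIntegral_pos_of_pos
        (hinvc.intervalIntegrable _ _) (fun x => inv_pos.2 (hpos x)) (by linarith)
    have hc0 : (MF * ρhat 0) * Vc L ρL 0 - D * MF * deriv ρhat 0 = 0 := by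
      have h : (∫ x in (-Real.pi)..Real.pi, Vc L ρL x)
          = (((MF * ρhat 0) * Vc L ρL 0 - D * MF * deriv ρhat 0) / MF)
              * (∫ x in (-Real.pi)..Real.pi, (ρhat x)⁻¹)
            + D * ∫ x in (-Real.pi)..Real.pi, deriv ρhat x / ρhat x := by
        rw [show (fun x => Vc L ρL x) = fun x =>
            (((MF * ρhat 0) * Vc L ρL 0 - D * MF * deriv ρhat 0) / MF) * (ρhat x)⁻¹
              + D * (deriv ρhat x / ρhat x) from funext hVform]
        rw [intervalIntegral.integral_add
            ((continuous_const.fun_mul hinvc).intervalIntegrable _ _)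
            ((continuous_const.fun_mul hQcont).intervalIntegrable _ _),
          intervalIntegral.integral_const_mul, intervalIntegral.integral_const_mul]
      rw [hVint, hQ0, mul_zero, add_zero] at h
      have h2 := h.symm
      rcases mul_eq_zero.mp h2 with h3 | h3
      · field_simp [ne_of_gt hMF0] at h3
        linear_combination MF * h3
      · exact absurd h3 (ne_of_gt hinvpos)
    have hVQ : ∀ x, Vc L ρL x = D * (deriv ρhat x / ρhat x) := by
      intro x
      rw [hVform x, hc0]
      field_simp
      ring
    -- recover ρL from V
    have hVfun : Vc L ρL = fun x => D * (deriv ρhat x / ρhat x) := funext hVQ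
    have hρLval : ∀ x, 2 * ρL x + Wc L ρL x
        = D * deriv (fun z => deriv ρhat z / ρhat z) x := by
      intro x
      have h1 := hasDerivAt_Vc hL hcρ hpρ x
      rw [hVfun] at h1
      have h2 : HasDerivAt (fun x => D * (deriv ρhat x / ρhat x))
          (D * deriv (fun z => deriv ρhat z / ρhat z) x) x :=
        ((hQdiff x).hasDerivAt.const_mul D)
      exact h1.unique h2
    -- W - (D/L²) log ρhat is constant
    have hψd : ∀ x, HasDerivAt
        (fun x => Wc L ρL x - (D / L^2) * Real.log (ρhat x)) 0 x := by
      intro x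
      have h := (hasDerivAt_Wc hL hcρ hpρ x).sub ((hlogd x).const_mul (D / L^2))
      have h2 : Vc L ρL x / L^2 - (D / L^2) * (deriv ρhat x / ρhat x) = 0 := by
        rw [hVQ x]
        ring
      rw [h2] at h
      exact h
    have hψc : ∀ x y : ℝ, Wc L ρL x - (D / L^2) * Real.log (ρhat x)
        = Wc L ρL y - (D / L^2) * Real.log (ρhat y) :=
      fun x y => is_const_of_deriv_eq_zero
        (fun t => (hψd t).differentiableAt) (fun t => (hψd t).deriv) x y
    have hρform : ∀ x, ρL x
        = (D/2) * deriv (fun z => deriv ρhat z / ρhat z) x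
          - (D/(2*L^2)) * Real.log (ρhat x)
          - (Wc L ρL 0 - (D / L^2) * Real.log (ρhat 0)) / 2 := by
      intro x
      have h1 := hρLval x
      have h2 := hψc x 0
      linear_combination h1 / 2 - h2 / 2
    -- determine the constant from the mass condition
    have hmass2 : (1 - MF)
        = -(D/(2*L^2)) * (∫ y in (-Real.pi)..Real.pi, Real.log (ρhat y))
          - (Wc L ρL 0 - (D / L^2) * Real.log (ρhat 0)) / 2 * (2 * Real.pi) := by
      rw [← hmass, show (fun x => ρL x) = fun x =>
          ((D/2) * deriv (fun z => deriv ρhat z / ρhat z) x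
            - (D/(2*L^2)) * Real.log (ρhat x))
          + (- ((Wc L ρL 0 - (D / L^2) * Real.log (ρhat 0)) / 2)) from
          funext fun x => by rw [hρform x]; ring]
      rw [intervalIntegral.integral_add
          ((((continuous_const.fun_mul hQdc).fun_sub (continuous_const.fun_mul hlogc))).intervalIntegrable _ _)
          intervalIntegrable_const,
        intervalIntegral.integral_sub
          ((continuous_const.fun_mul hQdc).intervalIntegrable _ _)
          ((continuous_const.fun_mul hlogc).intervalIntegrable _ _),
        intervalIntegral.integral_const_mul, intervalIntegral.integral_const_mul,
        hIQd, intervalIntegral.integral_const]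
      simp only [smul_eq_mul]
      ring
    -- conclude the bound
    apply csSup_le
    · exact ⟨_, ⟨-Real.pi, ⟨le_rfl, by linarith⟩, rfl⟩⟩
    rintro v ⟨x, hx, rfl⟩
    simp only
    have h1 : 0 ≤ 2 * Real.pi * ρL x := mul_nonneg (by positivity) (hnn x)
    have h2 : 2 * Real.pi * ρL x
        = (1 - MF) - (-Real.pi * D * deriv (fun z => deriv ρhat z / ρhat z) x
            + (Real.pi * D / L ^ 2) * Real.log (ρhat x)
            - D * (∫ y in (-Real.pi)..Real.pi, Real.log (ρhat y)) / (2 * L ^ 2)) := by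
      rw [hρform x, hmass2]
      field_simp
      ring
    linarith
  · -- sufficiency
    intro hS
    set Cv : ℝ := ∫ y in (-Real.pi)..Real.pi, Real.log (ρhat y) with hCv
    set K : ℝ := ((1 - MF) + D * Cv / (2*L^2)) / (2*Real.pi) with hKdef
    set ρ0 : ℝ → ℝ := fun x => D/2 * deriv (fun z => deriv ρhat z / ρhat z) x
        - D/(2*L^2) * Real.log (ρhat x) + K with hρ0def
    have hπne : Real.pi ≠ 0 := ne_of_gt hπ
    have hρ0c : Continuous ρ0 :=
      ((continuous_const.mul hQdc).sub (continuous_const.mul hlogc)).add continuous_const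
    have hρ0p : Function.Periodic ρ0 (2*Real.pi) := by
      intro x
      simp only [hρ0def]
      rw [hdQper x, hper x]
    -- nonnegativity from the sSup bound
    have hhc : Continuous (fun x =>
        -Real.pi * D * deriv (fun z => deriv ρhat z / ρhat z) x
          + (Real.pi * D / L ^ 2) * Real.log (ρhat x) - D * Cv / (2 * L ^ 2)) :=
      ((continuous_const.mul hQdc).add (continuous_const.mul hlogc)).sub continuous_const
    have hbdd : BddAbove ((fun x =>
        -Real.pi * D * deriv (fun z => deriv ρhat z / ρhat z) x
          + (Real.pi * D / L ^ 2) * Real.log (ρhat x) - D * Cv / (2 * L ^ 2)) ''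
        Set.Icc (-Real.pi) Real.pi) :=
      IsCompact.bddAbove_image isCompact_Icc hhc.continuousOn
    have hnn : ∀ x, 0 ≤ ρ0 x := by
      intro x
      obtain ⟨y, hy, hxy⟩ := hρ0p.exists_mem_Ico (by positivity) x (-Real.pi)
      rw [hxy]
      have hyIcc : y ∈ Set.Icc (-Real.pi) Real.pi := ⟨hy.1, by
        have := hy.2
        linarith⟩
      have h1 : -Real.pi * D * deriv (fun z => deriv ρhat z / ρhat z) y
          + (Real.pi * D / L ^ 2) * Real.log (ρhat y) - D * Cv / (2 * L ^ 2)
          ≤ 1 - MF := le_trans (le_csSup hbdd ⟨y, hyIcc, rfl⟩) hS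
      have h2 : ρ0 y = ((1 - MF)
          - (-Real.pi * D * deriv (fun z => deriv ρhat z / ρhat z) y
            + (Real.pi * D / L ^ 2) * Real.log (ρhat y) - D * Cv / (2 * L ^ 2)))
          / (2*Real.pi) := by
        simp only [hρ0def, hKdef]
        field_simp
        ring
      rw [h2]
      apply div_nonneg (by linarith) (by positivity)
    -- the velocity field generated by the candidate equals D ρ'/ρ
    have hVW : ∀ x, Vc L ρ0 x = D * (deriv ρhat x / ρhat x) := by
      have hu : ∀ x, HasDerivAt (fun x => Vc L ρ0 x - D * (deriv ρhat x / ρhat x))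
          (Wc L ρ0 x - (D/L^2 * Real.log (ρhat x) - 2*K)) x := by
        intro x
        have h1 := hasDerivAt_Vc hL hρ0c hρ0p x
        have h2 : HasDerivAt (fun x => D * (deriv ρhat x / ρhat x))
            (D * deriv (fun z => deriv ρhat z / ρhat z) x) x :=
          (hQdiff x).hasDerivAt.const_mul D
        have h := h1.sub h2
        refine h.congr_deriv ?_
        simp only [hρ0def]
        ring
      have hz : ∀ x, HasDerivAt
          (fun x => Wc L ρ0 x - (D/L^2 * Real.log (ρhat x) - 2*K))
          ((Vc L ρ0 x - D * (deriv ρhat x / ρhat x)) / L^2) x := by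
        intro x
        have h1 := hasDerivAt_Wc hL hρ0c hρ0p x
        have h2 : HasDerivAt (fun x => D/L^2 * Real.log (ρhat x) - 2*K)
            (D/L^2 * (deriv ρhat x / ρhat x)) x :=
          ((hlogd x).const_mul (D/L^2)).sub_const (2*K)
        have h := h1.sub h2
        refine h.congr_deriv ?_
        ring
      have huper : Function.Periodic
          (fun x => Vc L ρ0 x - D * (deriv ρhat x / ρhat x)) (2*Real.pi) := by
        intro x
        show Vc L ρ0 (x + 2*Real.pi)
            - D * (deriv ρhat (x + 2*Real.pi) / ρhat (x + 2*Real.pi))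
          = Vc L ρ0 x - D * (deriv ρhat x / ρhat x)
        rw [Vc_periodic hL hρ0c hρ0p x, hdper x, hper x]
      have h0 := ode_vanish hL hu hz huper
      intro x
      have h := h0 x
      linarith
    refine ⟨ρ0, hρ0c, hρ0p, hnn, ?_, ?_⟩
    · -- mass
      simp only [hρ0def]
      rw [intervalIntegral.integral_add
          (((continuous_const.fun_mul hQdc).fun_sub (continuous_const.fun_mul hlogc)).intervalIntegrable _ _)
          intervalIntegrable_const,
        intervalIntegral.integral_sub
          ((continuous_const.fun_mul hQdc).intervalIntegrable _ _)
          ((continuous_const.fun_mul hlogc).intervalIntegrable _ _),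
        intervalIntegral.integral_const_mul, intervalIntegral.integral_const_mul,
        hIQd, intervalIntegral.integral_const, ← hCv]
      simp only [smul_eq_mul, hKdef]
      field_simp
      ring
    · -- the steady-state equation
      intro x
      have hfeq : (fun z => (MF * ρhat z) *
            ∫ y in (-Real.pi)..Real.pi, perKernel L (z - y) * ρ0 y)
          = fun z => MF * D * deriv ρhat z := by
        funext z
        rw [conv_eq_Vc hL hρ0c hρ0p z, hVW z]
        field_simp [hρne z]
      have hconst1 : deriv (fun z => MF * ρhat z) = fun z => MF * deriv ρhat z :=
        funext fun z => deriv_const_mul MF (hd1 z)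
      rw [hfeq, hconst1, deriv_const_mul (MF*D) (hd2 x), deriv_const_mul MF (hd2 x)]
      ring
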